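/- Let Δ be a simple polytope with 0 in its interior, ξ generic (α_{i,p}·ξ ≠ 0 for all p,i), and q the unique vertex where x ↦ ξ·x is minimized on Δ. For the flipped edge vectors α^♯_{i,p} := sign(α_{i,p}·ξ)·α_{i,p}, write p = Σᵢ a_{i,p} α^♯_{i,p}. Then for every vertex p ≠ q, at least one coefficient a_{i,p} is strictly positive, while at q all a_{i,q} < 0. -/

import Mathlib

/-- For a simple polytope `Δ = conv(V)` with `0` in its interior, a
generic `ξ`, polarized edge vectors `α♯_{i,p} = sign(α_{i,p}·ξ)·α_{i,p}`, and
`p = Σᵢ a_{i,p} α♯_{i,p}`: at the minimizing vertex `q` all `a_{i,q} < 0`, while at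
every other vertex `p ≠ q` at least one `a_{i,p} > 0`. -/
theorem stmt_9 (n : ℕ) (V : Finset (Fin n → ℝ)) (Δ : Set (Fin n → ℝ))
    (hΔ : Δ = convexHull ℝ ↑V)
    (α : (Fin n → ℝ) → Module.Basis (Fin n) ℝ (Fin n → ℝ))
    (hcone : ∀ p ∈ V, ∀ x ∈ Δ, ∀ i, 0 ≤ (α p).repr (x - p) i)
    (hedge : ∀ p ∈ V, ∀ i, ∃ t : ℝ, 0 < t ∧ p + t • (α p) i ∈ Δ)
    (ξ : Fin n → ℝ)
    (hgen : ∀ p ∈ V, ∀ i, (∑ j, (α p) i j * ξ j) ≠ 0)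
    (h0 : (0 : Fin n → ℝ) ∈ interior Δ)
    (αs : (Fin n → ℝ) → Fin n → (Fin n → ℝ))
    (hαs : ∀ p i, αs p i = if 0 < ∑ j, (α p) i j * ξ j then (α p) i else -((α p) i))
    (a : (Fin n → ℝ) → Fin n → ℝ)
    (ha : ∀ p ∈ V, p = ∑ i, a p i • αs p i)
    (q : Fin n → ℝ) (hq : q ∈ V)
    (hmin : ∀ x ∈ Δ, ∑ j, q j * ξ j ≤ ∑ j, x j * ξ j) :
    (∀ p ∈ V, p ≠ q → ∃ i, 0 < a p i) ∧ (∀ i, a q i < 0) := by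
  classical
  have hVΔ : ∀ p ∈ V, p ∈ Δ := by
    intro p hp; rw [hΔ]; exact subset_convexHull ℝ _ hp
  -- strict positivity of repr(-p)
  have hpos : ∀ p ∈ V, ∀ i, 0 < (α p).repr (-p) i := by
    intro p hp i
    obtain ⟨ε, hε, hball⟩ := Metric.mem_nhds_iff.mp (mem_interior_iff_mem_nhds.mp h0)
    set δ : ℝ := ε / (2 * (‖(α p) i‖ + 1)) with hδdef
    have hnorm : (0:ℝ) < ‖(α p) i‖ + 1 := by positivity
    have hδ : 0 < δ := by positivity
    set x : Fin n → ℝ := (-δ) • (α p) i with hx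
    have hxball : x ∈ Metric.ball (0 : Fin n → ℝ) ε := by
      rw [mem_ball_zero_iff, hx, norm_smul]
      have h1 : ‖(-δ : ℝ)‖ = δ := by rw [norm_neg, Real.norm_eq_abs, abs_of_pos hδ]
      rw [h1]
      have h2 : δ * ‖(α p) i‖ ≤ δ * (‖(α p) i‖ + 1) := by nlinarith [norm_nonneg ((α p) i)]
      have h3 : δ * (‖(α p) i‖ + 1) = ε / 2 := by
        rw [hδdef, div_mul_eq_mul_div, div_eq_div_iff (by positivity) (by norm_num)]; ring
      linarith
    have h3 := hcone p hp x (hball hxball) i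
    have h4 : (α p).repr (x - p) i = -δ + (α p).repr (-p) i := by
      rw [sub_eq_add_neg, map_add, hx, map_smul, Module.Basis.repr_self]
      simp
    rw [h4] at h3
    linarith
  -- repr p in terms of a
  have hrepr : ∀ p ∈ V, ∀ j, (α p).repr p j
      = (if 0 < ∑ k, (α p) j k * ξ k then a p j else -(a p j)) := by
    intro p hp j
    have h := congrArg (fun v => ((α p).repr v) j) (ha p hp)
    rw [h, map_sum, Finsupp.finset_sum_apply]
    have hterm : ∀ i, ((α p).repr (a p i • αs p i)) j
        = if i = j then (if 0 < ∑ k, (α p) i k * ξ k then a p i else -(a p i)) else 0 := by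
      intro i
      rw [hαs]
      split_ifs with hc hij hij
      · rw [map_smul, Module.Basis.repr_self, Finsupp.smul_apply, Finsupp.single_apply,
          if_pos hij]; simp
      · rw [map_smul, Module.Basis.repr_self, Finsupp.smul_apply, Finsupp.single_apply,
          if_neg hij]; simp
      · rw [map_smul, map_neg, Module.Basis.repr_self, Finsupp.smul_apply, Finsupp.neg_apply,
          Finsupp.single_apply, if_pos hij]; simp
      · rw [map_smul, map_neg, Module.Basis.repr_self, Finsupp.smul_apply, Finsupp.neg_apply,
          Finsupp.single_apply, if_neg hij]; simp
    rw [Finset.sum_congr rfl fun i _ => hterm i,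
      Finset.sum_ite_eq' Finset.univ j
        (fun i => if 0 < ∑ k, (α p) i k * ξ k then a p i else -(a p i))]
    simp
  -- repr p j is negative
  have hreprneg : ∀ p ∈ V, ∀ j, (α p).repr p j < 0 := by
    intro p hp j
    have h := hpos p hp j
    rw [map_neg, Finsupp.neg_apply] at h
    linarith
  constructor
  · intro p hp hne
    by_contra hno
    push_neg at hno
    have hdotpos : ∀ i, 0 < ∑ k, (α p) i k * ξ k := by
      intro i
      rcases lt_trichotomy (∑ k, (α p) i k * ξ k) 0 with h | h | h
      · exfalso
        have h1 := hrepr p hp i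
        rw [if_neg (by linarith)] at h1
        have h2 := hreprneg p hp i
        rw [h1] at h2
        have : 0 < a p i := by linarith
        exact absurd this (not_lt.mpr (hno i))
      · exact absurd h (hgen p hp i)
      · exact h
    have hd : ∀ i, 0 ≤ (α p).repr (q - p) i := fun i => hcone p hp q (hVΔ q hq) i
    have hsum : q - p = ∑ i, (α p).repr (q - p) i • (α p) i := ((α p).sum_repr (q - p)).symm
    have hLsum : ∑ j, (q - p) j * ξ j
        = ∑ i, (α p).repr (q - p) i * ∑ k, (α p) i k * ξ k := by
      calc ∑ j, (q - p) j * ξ j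
          = ∑ j, (∑ i, (α p).repr (q - p) i • (α p) i) j * ξ j := by rw [← hsum]
        _ = ∑ j, ∑ i, (α p).repr (q - p) i * ((α p) i j * ξ j) := by
            refine Finset.sum_congr rfl fun j _ => ?_
            simp [Finset.sum_apply, Finset.sum_mul, mul_assoc]
        _ = ∑ i, (α p).repr (q - p) i * ∑ k, (α p) i k * ξ k := by
            rw [Finset.sum_comm]
            exact Finset.sum_congr rfl fun i _ => by rw [Finset.mul_sum]
    have hle : ∑ j, (q - p) j * ξ j ≤ 0 := by
      have h1 := hmin p (hVΔ p hp)
      have h2 : ∑ j, (q - p) j * ξ j = (∑ j, q j * ξ j) - ∑ j, p j * ξ j := by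
        simp [sub_mul, Finset.sum_sub_distrib]
      linarith
    have htn : ∀ i ∈ Finset.univ, (0:ℝ) ≤ (α p).repr (q - p) i * ∑ k, (α p) i k * ξ k :=
      fun i _ => mul_nonneg (hd i) (le_of_lt (hdotpos i))
    have hzero : ∑ i, (α p).repr (q - p) i * ∑ k, (α p) i k * ξ k = 0 := by
      refine le_antisymm ?_ (Finset.sum_nonneg htn)
      rw [← hLsum]; exact hle
    have hci : ∀ i, (α p).repr (q - p) i = 0 := by
      intro i
      have h := (Finset.sum_eq_zero_iff_of_nonneg htn).mp hzero i (Finset.mem_univ i)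
      rcases mul_eq_zero.mp h with h' | h'
      · exact h'
      · exact absurd h' (ne_of_gt (hdotpos i))
    have hqp : q - p = 0 := by
      rw [hsum]
      exact Finset.sum_eq_zero fun i _ => by rw [hci i, zero_smul]
    exact absurd (sub_eq_zero.mp hqp).symm hne
  · intro i
    have hdotq : 0 < ∑ k, (α q) i k * ξ k := by
      rcases hedge q hq i with ⟨t, ht, hin⟩
      have h1 := hmin _ hin
      have h2 : ∑ j, (q + t • (α q) i) j * ξ j
          = (∑ j, q j * ξ j) + t * ∑ j, (α q) i j * ξ j := by
        simp [add_mul, mul_assoc, Finset.sum_add_distrib, Finset.mul_sum]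
      rw [h2] at h1
      have h3 : 0 ≤ t * ∑ j, (α q) i j * ξ j := by linarith
      have h4 : 0 ≤ ∑ j, (α q) i j * ξ j := by nlinarith
      exact lt_of_le_of_ne h4 (Ne.symm (hgen q hq i))
    have h5 := hrepr q hq i
    rw [if_pos hdotq] at h5
    have h6 := hreprneg q hq i
    rw [h5] at h6
    exact h6
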